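/- Let n_1 ≥ κ > n_2 ≥ 1 and let B_2(n_1,n_2;κ) be obtained from disjoint K_{n_1} and K_{n_2} by adding an n_2-matching M_1 between K_{n_2} and n_2 vertices of K_{n_1}, and joining every vertex of K_{n_2} to a fixed set of κ−n_2 further vertices of K_{n_1} not covered by M_1. Then the least eigenvalue of the complement of B_2(n_1,n_2;κ) equals −√((n_2−1)^2 + (n_1−κ)n_2). -/

import Mathlib

open Classical in
/-- The adjacency matrix of a simple graph, with real entries. -/
noncomputable def adjMat {V : Type*} [Fintype V] (G : SimpleGraph V) : Matrix V V ℝ :=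
  Matrix.of fun u v => if G.Adj u v then 1 else 0

/-- The least eigenvalue of a real matrix. -/
noncomputable def minEig {V : Type*} [Fintype V] (A : Matrix V V ℝ) : ℝ :=
  sInf {μ : ℝ | ∃ x : V → ℝ, x ≠ 0 ∧ A.mulVec x = μ • x}

/-- `B2 n1 n2 κ` (for `n1 ≥ κ > n2`) is obtained from disjoint complete graphs `K_{n1}`
and `K_{n2}` by adding an `n2`-matching (the `i`-th vertex of the first clique is matched
to the `i`-th vertex of the second for `i < n2`) and joining every vertex of `K_{n2}` to
the `κ − n2` further vertices of `K_{n1}` with indices `n2 ≤ i < κ`, none of which is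
covered by the matching. -/
def B2 (n1 n2 κ : ℕ) : SimpleGraph (Fin n1 ⊕ Fin n2) where
  Adj u v :=
    Sum.elim
      (fun a => Sum.elim (fun b : Fin n1 => a ≠ b)
        (fun b : Fin n2 => ((a : ℕ) = (b : ℕ) ∧ (a : ℕ) < n2) ∨ (n2 ≤ (a : ℕ) ∧ (a : ℕ) < κ)) v)
      (fun a : Fin n2 => Sum.elim
        (fun b : Fin n1 => ((b : ℕ) = (a : ℕ) ∧ (b : ℕ) < n2) ∨ (n2 ≤ (b : ℕ) ∧ (b : ℕ) < κ))
        (fun b : Fin n2 => a ≠ b) v) u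
  symm := by
    constructor
    rintro (a | a) (b | b) h
    · exact h.symm
    · exact h
    · exact h
    · exact h.symm
  loopless := by constructor; rintro (a | a) h <;> exact h rfl

open Finset

section helpers
open Classical
variable {n1 n2 κ : ℕ}

lemma B2c_ll (a b : Fin n1) : (B2 n1 n2 κ)ᶜ.Adj (Sum.inl a) (Sum.inl b) ↔ False := by
  rw [SimpleGraph.compl_adj, iff_false, not_and, not_not]
  intro hne
  exact (show (B2 n1 n2 κ).Adj (Sum.inl a) (Sum.inl b) ↔ a ≠ b from Iff.rfl).mpr
    (fun hab => hne (congrArg Sum.inl hab))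

lemma B2c_rr (b c : Fin n2) : (B2 n1 n2 κ)ᶜ.Adj (Sum.inr b) (Sum.inr c) ↔ False := by
  rw [SimpleGraph.compl_adj, iff_false, not_and, not_not]
  intro hne
  exact (show (B2 n1 n2 κ).Adj (Sum.inr b) (Sum.inr c) ↔ b ≠ c from Iff.rfl).mpr
    (fun hbc => hne (congrArg Sum.inr hbc))

lemma B2c_lr (h2 : n2 < κ) (a : Fin n1) (b : Fin n2) :
    (B2 n1 n2 κ)ᶜ.Adj (Sum.inl a) (Sum.inr b) ↔ ((a:ℕ) < n2 ∧ (a:ℕ) ≠ (b:ℕ)) ∨ κ ≤ (a:ℕ) := by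
  rw [SimpleGraph.compl_adj]
  rw [show (B2 n1 n2 κ).Adj (Sum.inl a) (Sum.inr b) ↔
      (((a:ℕ) = (b:ℕ) ∧ (a:ℕ) < n2) ∨ (n2 ≤ (a:ℕ) ∧ (a:ℕ) < κ)) from Iff.rfl]
  have hb := b.isLt
  constructor
  · rintro ⟨-, h⟩; omega
  · intro h
    refine ⟨by simp, by omega⟩

lemma B2c_rl (h2 : n2 < κ) (a : Fin n1) (b : Fin n2) :
    (B2 n1 n2 κ)ᶜ.Adj (Sum.inr b) (Sum.inl a) ↔ ((a:ℕ) < n2 ∧ (a:ℕ) ≠ (b:ℕ)) ∨ κ ≤ (a:ℕ) := by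
  rw [SimpleGraph.compl_adj]
  rw [show (B2 n1 n2 κ).Adj (Sum.inr b) (Sum.inl a) ↔
      (((a:ℕ) = (b:ℕ) ∧ (a:ℕ) < n2) ∨ (n2 ≤ (a:ℕ) ∧ (a:ℕ) < κ)) from Iff.rfl]
  have hb := b.isLt
  constructor
  · rintro ⟨-, h⟩; omega
  · intro h
    refine ⟨by simp, by omega⟩

lemma mulVec_inl (h2 : n2 < κ) (x : Fin n1 ⊕ Fin n2 → ℝ) (a : Fin n1) :
    (adjMat ((B2 n1 n2 κ)ᶜ)).mulVec x (Sum.inl a) =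
      ∑ b : Fin n2, (if ((a:ℕ) < n2 ∧ (a:ℕ) ≠ (b:ℕ)) ∨ κ ≤ (a:ℕ) then x (Sum.inr b) else 0) := by
  unfold adjMat Matrix.mulVec dotProduct
  rw [Fintype.sum_sum_type]
  simp only [Matrix.of_apply, B2c_ll, B2c_lr h2, if_false, ite_mul, one_mul, zero_mul,
    Finset.sum_const_zero, zero_add]

lemma mulVec_inr (h2 : n2 < κ) (x : Fin n1 ⊕ Fin n2 → ℝ) (b : Fin n2) :
    (adjMat ((B2 n1 n2 κ)ᶜ)).mulVec x (Sum.inr b) =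
      ∑ a : Fin n1, (if ((a:ℕ) < n2 ∧ (a:ℕ) ≠ (b:ℕ)) ∨ κ ≤ (a:ℕ) then x (Sum.inl a) else 0) := by
  unfold adjMat Matrix.mulVec dotProduct
  rw [Fintype.sum_sum_type]
  simp only [Matrix.of_apply, B2c_rr, B2c_rl h2, if_false, ite_mul, one_mul, zero_mul,
    Finset.sum_const_zero, add_zero]

lemma sum_fin_lt (hn : n2 ≤ n1) (g : ℕ → ℝ) :
    ∑ a : Fin n1, (if (a:ℕ) < n2 then g (a:ℕ) else 0) = ∑ b : Fin n2, g (b:ℕ) := by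
  rw [Fin.sum_univ_eq_sum_range (fun i => if i < n2 then g i else 0) n1,
      Fin.sum_univ_eq_sum_range g n2]
  rw [Finset.range_eq_Ico, ← Finset.sum_Ico_consecutive _ (Nat.zero_le n2) hn]
  have hz : ∑ i ∈ Finset.Ico n2 n1, (if i < n2 then g i else 0) = 0 := by
    apply Finset.sum_eq_zero
    intro i hi
    rw [Finset.mem_Ico] at hi
    rw [if_neg (by omega)]
  rw [hz, add_zero, ← Finset.range_eq_Ico]
  apply Finset.sum_congr rfl
  intro i hi
  rw [Finset.mem_range] at hi
  rw [if_pos hi]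

lemma sum_fin_ge (hκ : κ ≤ n1) (c : ℝ) :
    ∑ a : Fin n1, (if κ ≤ (a:ℕ) then c else 0) = ((n1 - κ : ℕ) : ℝ) * c := by
  rw [Fin.sum_univ_eq_sum_range (fun i => if κ ≤ i then c else 0) n1]
  rw [Finset.range_eq_Ico, ← Finset.sum_Ico_consecutive _ (Nat.zero_le κ) hκ]
  have hz : ∑ i ∈ Finset.Ico 0 κ, (if κ ≤ i then c else 0) = 0 := by
    apply Finset.sum_eq_zero
    intro i hi
    rw [Finset.mem_Ico] at hi
    rw [if_neg (by omega)]
  have hc : ∑ i ∈ Finset.Ico κ n1, (if κ ≤ i then c else 0) = ∑ i ∈ Finset.Ico κ n1, c := by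
    apply Finset.sum_congr rfl
    intro i hi
    rw [Finset.mem_Ico] at hi
    rw [if_pos hi.1]
  rw [hz, zero_add, hc, Finset.sum_const, Nat.card_Ico, nsmul_eq_mul]

lemma rowl_eval (h2 : n2 < κ) (v : Fin n2 → ℝ) (a : Fin n1) :
    ∑ b : Fin n2, (if ((a:ℕ) < n2 ∧ (a:ℕ) ≠ (b:ℕ)) ∨ κ ≤ (a:ℕ) then v b else 0) =
      if h : (a:ℕ) < n2 then (∑ b, v b) - v ⟨(a:ℕ), h⟩
      else if κ ≤ (a:ℕ) then (∑ b, v b) else 0 := by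
  by_cases h : (a:ℕ) < n2
  · rw [dif_pos h]
    have key : ∀ b : Fin n2, (if ((a:ℕ) < n2 ∧ (a:ℕ) ≠ (b:ℕ)) ∨ κ ≤ (a:ℕ) then v b else 0)
        = v b - (if b = ⟨(a:ℕ), h⟩ then v b else 0) := by
      intro b
      by_cases hb : b = (⟨(a:ℕ), h⟩ : Fin n2)
      · have hbv : (b:ℕ) = (a:ℕ) := by rw [hb]
        have c1 : ¬(((a:ℕ) < n2 ∧ (a:ℕ) ≠ (b:ℕ)) ∨ κ ≤ (a:ℕ)) := by omega
        rw [if_pos hb, if_neg c1]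
        ring
      · have hbv : (a:ℕ) ≠ (b:ℕ) := fun hh => hb (Fin.ext hh.symm)
        rw [if_pos (Or.inl ⟨h, hbv⟩), if_neg hb, sub_zero]
    rw [Finset.sum_congr rfl (fun b _ => key b), Finset.sum_sub_distrib,
      Finset.sum_ite_eq' Finset.univ (⟨(a:ℕ), h⟩ : Fin n2) v, if_pos (Finset.mem_univ _)]
  · rw [dif_neg h]
    by_cases hk : κ ≤ (a:ℕ)
    · rw [if_pos hk]
      exact Finset.sum_congr rfl (fun b _ => if_pos (Or.inr hk))
    · rw [if_neg hk]
      exact Finset.sum_eq_zero (fun b _ => if_neg (by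
        push_neg
        exact ⟨fun hlt => absurd hlt h, by omega⟩))

lemma rowr_eval (h1 : κ ≤ n1) (h2 : n2 < κ) (u : Fin n1 → ℝ) (b : Fin n2) :
    ∑ a : Fin n1, (if ((a:ℕ) < n2 ∧ (a:ℕ) ≠ (b:ℕ)) ∨ κ ≤ (a:ℕ) then u a else 0) =
      (∑ a : Fin n1, if (a:ℕ) < n2 then u a else 0)
        - u ⟨(b:ℕ), lt_of_lt_of_le (b.isLt.trans h2) h1⟩
        + (∑ a : Fin n1, if κ ≤ (a:ℕ) then u a else 0) := by
  set bb : Fin n1 := ⟨(b:ℕ), lt_of_lt_of_le (b.isLt.trans h2) h1⟩ with hbb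
  have key : ∀ a : Fin n1, (if ((a:ℕ) < n2 ∧ (a:ℕ) ≠ (b:ℕ)) ∨ κ ≤ (a:ℕ) then u a else 0)
      = (if (a:ℕ) < n2 then u a else 0) - (if a = bb then u a else 0)
        + (if κ ≤ (a:ℕ) then u a else 0) := by
    intro a
    have hbv : (bb:ℕ) = (b:ℕ) := rfl
    have hbn2 : (b:ℕ) < n2 := b.isLt
    by_cases hab : a = bb
    · have hav : (a:ℕ) = (b:ℕ) := by rw [hab]
      have c1 : ¬(((a:ℕ) < n2 ∧ (a:ℕ) ≠ (b:ℕ)) ∨ κ ≤ (a:ℕ)) := by omega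
      have c2 : (a:ℕ) < n2 := by omega
      have c3 : ¬ κ ≤ (a:ℕ) := by omega
      rw [if_neg c1, if_pos c2, if_pos hab, if_neg c3]
      ring
    · have hav : (a:ℕ) ≠ (b:ℕ) := fun hh => hab (Fin.ext (hh.trans hbv.symm))
      by_cases h : (a:ℕ) < n2
      · have c3 : ¬ κ ≤ (a:ℕ) := by omega
        rw [if_pos (Or.inl ⟨h, hav⟩), if_pos h, if_neg hab, if_neg c3]
        ring
      · by_cases hk : κ ≤ (a:ℕ)
        · rw [if_pos (Or.inr hk), if_neg h, if_neg hab, if_pos hk]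
          ring
        · have c1 : ¬(((a:ℕ) < n2 ∧ (a:ℕ) ≠ (b:ℕ)) ∨ κ ≤ (a:ℕ)) := by omega
          rw [if_neg c1, if_neg h, if_neg hab, if_neg hk]
          ring
  rw [Finset.sum_congr rfl (fun a _ => key a), Finset.sum_add_distrib, Finset.sum_sub_distrib,
    Finset.sum_ite_eq' Finset.univ bb u, if_pos (Finset.mem_univ _)]

lemma bound_sub {m : ℕ} (hm : 1 ≤ m) (v : Fin m → ℝ) :
    ∑ b : Fin m, ((∑ c, v c) - v b)^2 ≤ ((m:ℝ) - 1)^2 * ∑ b, v b^2 := by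
  have key : ∀ b : Fin m, ((∑ c, v c) - v b)^2 ≤ ((m:ℝ) - 1) * ((∑ c, v c^2) - v b^2) := by
    intro b
    have e1 : ∑ c ∈ Finset.univ.erase b, v c = (∑ c, v c) - v b :=
      Finset.sum_erase_eq_sub (Finset.mem_univ b)
    have e2 : ∑ c ∈ Finset.univ.erase b, v c^2 = (∑ c, v c^2) - v b^2 :=
      Finset.sum_erase_eq_sub (Finset.mem_univ b)
    have hcs := sq_sum_le_card_mul_sum_sq (s := Finset.univ.erase b) (f := v)
    rw [e1, e2, Finset.card_erase_of_mem (Finset.mem_univ b), Finset.card_univ,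
      Fintype.card_fin, Nat.cast_sub hm, Nat.cast_one] at hcs
    exact hcs
  calc ∑ b : Fin m, ((∑ c, v c) - v b)^2
      ≤ ∑ b : Fin m, ((m:ℝ) - 1) * ((∑ c, v c^2) - v b^2) := Finset.sum_le_sum (fun b _ => key b)
    _ = ((m:ℝ) - 1)^2 * ∑ b, v b^2 := by
        rw [← Finset.mul_sum, Finset.sum_sub_distrib, Finset.sum_const, Finset.card_univ,
          Fintype.card_fin, nsmul_eq_mul]
        ring

lemma twice_le {p q r : ℝ} (hp : 0 ≤ p) (hq : 0 ≤ q) (h : r^2 ≤ p * q) : 2 * r ≤ p + q := by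
  nlinarith [sq_nonneg (p - q), sq_nonneg (p + q - 2*r), sq_nonneg r]

lemma card_ge :
    ((Finset.univ.filter (fun a : Fin n1 => κ ≤ (a:ℕ))).card) = n1 - κ := by
  rw [Finset.card_filter]
  rw [Fin.sum_univ_eq_sum_range (fun i => if κ ≤ i then 1 else 0) n1]
  rw [← Finset.card_filter]
  have : (Finset.range n1).filter (fun i => κ ≤ i) = Finset.Ico κ n1 := by
    ext i
    simp only [Finset.mem_filter, Finset.mem_range, Finset.mem_Ico]
    omega
  rw [this, Nat.card_Ico]

end helpers

section boundsec
open Classical Finset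
variable {n1 n2 κ : ℕ}

set_option maxHeartbeats 1000000 in
lemma eig_bound (h1 : κ ≤ n1) (h2 : n2 < κ) (h3 : 1 ≤ n2)
    (μ : ℝ) (u : Fin n1 → ℝ) (v : Fin n2 → ℝ)
    (e1 : ∀ a : Fin n1, (if h : (a:ℕ) < n2 then (∑ b, v b) - v ⟨(a:ℕ), h⟩
        else if κ ≤ (a:ℕ) then (∑ b, v b) else 0) = μ * u a)
    (e2 : ∀ b : Fin n2, (∑ a : Fin n1, if (a:ℕ) < n2 then u a else 0)
        - u ⟨(b:ℕ), lt_of_lt_of_le (b.isLt.trans h2) h1⟩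
        + (∑ a : Fin n1, if κ ≤ (a:ℕ) then u a else 0) = μ * v b) :
    μ^2 * ((∑ a, u a^2) + (∑ b, v b^2)) ≤
      (((n2:ℝ)-1)^2 + ((n1:ℝ)-κ)*n2) * ((∑ a, u a^2) + (∑ b, v b^2)) := by
  have hn2n1 : n2 ≤ n1 := le_of_lt (lt_of_lt_of_le h2 h1)
  have hβ0 : (0:ℝ) ≤ (n1:ℝ) - κ := by
    have : (κ:ℝ) ≤ (n1:ℝ) := by exact_mod_cast h1
    linarith
  have hn2R : (1:ℝ) ≤ (n2:ℝ) := by exact_mod_cast h3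
  set α : ℝ := ((n2:ℝ)-1)^2 with hα
  set β : ℝ := ((n1:ℝ)-κ)*n2 with hβ
  have hα0 : 0 ≤ α := sq_nonneg _
  have hβnn : 0 ≤ β := mul_nonneg hβ0 (by positivity)
  set S : ℝ := ∑ b, v b with hS
  set U2 : ℝ := ∑ b, v b^2 with hU2
  set Ut : ℝ := ∑ a, u a^2 with hUt
  have hU2nn : 0 ≤ U2 := Finset.sum_nonneg (fun b _ => sq_nonneg _)
  have hcast : ((n1 - κ : ℕ) : ℝ) = (n1:ℝ) - κ := by
    rw [Nat.cast_sub h1]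
  -- ===== first block: rows indexed by Fin n1 =====
  have split1 : ∑ a : Fin n1, (μ * u a)^2 = (∑ b : Fin n2, (S - v b)^2) + ((n1:ℝ)-κ) * S^2 := by
    have step0 : ∑ a : Fin n1, (μ * u a)^2 = ∑ a : Fin n1,
        (if h : (a:ℕ) < n2 then S - v ⟨(a:ℕ), h⟩ else if κ ≤ (a:ℕ) then S else 0)^2 :=
      Finset.sum_congr rfl (fun a _ => by rw [e1 a])
    have pt : ∀ a : Fin n1,
        (if h : (a:ℕ) < n2 then S - v ⟨(a:ℕ), h⟩ else if κ ≤ (a:ℕ) then S else 0)^2 =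
        (if (a:ℕ) < n2 then (fun i => if h : i < n2 then (S - v ⟨i, h⟩)^2 else 0) (a:ℕ) else 0)
          + (if κ ≤ (a:ℕ) then S^2 else 0) := by
      intro a
      beta_reduce
      by_cases h : (a:ℕ) < n2
      · rw [dif_pos h, if_pos h, dif_pos h, if_neg (show ¬ κ ≤ (a:ℕ) by omega), add_zero]
      · rw [dif_neg h, if_neg h, zero_add]
        by_cases hk : κ ≤ (a:ℕ)
        · rw [if_pos hk, if_pos hk]
        · rw [if_neg hk, if_neg hk]
          norm_num
    rw [step0, Finset.sum_congr rfl (fun a _ => pt a), Finset.sum_add_distrib,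
      sum_fin_lt hn2n1 (fun i => if h : i < n2 then (S - v ⟨i, h⟩)^2 else 0),
      sum_fin_ge h1 (S^2), hcast]
    congr 1
    apply Finset.sum_congr rfl
    intro b _
    rw [dif_pos b.isLt, Fin.eta]
  have bound1 : ∑ b : Fin n2, (S - v b)^2 ≤ α * U2 := bound_sub h3 v
  have hS2 : S^2 ≤ (n2:ℝ) * U2 := by
    have hcs := sq_sum_le_card_mul_sum_sq (s := (Finset.univ : Finset (Fin n2))) (f := v)
    rwa [Finset.card_univ, Fintype.card_fin] at hcs
  have bound2 : ((n1:ℝ)-κ) * S^2 ≤ β * U2 := by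
    calc ((n1:ℝ)-κ) * S^2 ≤ ((n1:ℝ)-κ) * ((n2:ℝ) * U2) := mul_le_mul_of_nonneg_left hS2 hβ0
      _ = β * U2 := by rw [hβ]; ring
  have R1 : ∑ a : Fin n1, (μ * u a)^2 ≤ (α + β) * U2 := by
    rw [split1]
    have := add_le_add bound1 bound2
    linarith
  -- ===== second block: rows indexed by Fin n2 =====
  set w : Fin n2 → ℝ := fun b => u ⟨(b:ℕ), lt_of_lt_of_le (b.isLt.trans h2) h1⟩ with hw
  set W : ℝ := ∑ b, w b with hW
  set U1 : ℝ := ∑ b, (w b)^2 with hU1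
  set Q : ℝ := ∑ a : Fin n1, (if κ ≤ (a:ℕ) then u a else 0) with hQ
  set U3 : ℝ := ∑ a : Fin n1, (if κ ≤ (a:ℕ) then u a^2 else 0) with hU3
  have hU1nn : 0 ≤ U1 := Finset.sum_nonneg (fun b _ => sq_nonneg _)
  have hU3nn : 0 ≤ U3 := Finset.sum_nonneg (fun a _ => by positivity)
  have hPw : (∑ a : Fin n1, if (a:ℕ) < n2 then u a else 0) = W := by
    have pt : ∀ a : Fin n1, (if (a:ℕ) < n2 then u a else 0) =
        (if (a:ℕ) < n2 then (fun i => if h : i < n1 then u ⟨i, h⟩ else 0) (a:ℕ) else 0) := by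
      intro a
      beta_reduce
      by_cases h : (a:ℕ) < n2
      · rw [if_pos h, if_pos h, dif_pos a.isLt, Fin.eta]
      · rw [if_neg h, if_neg h]
    rw [Finset.sum_congr rfl (fun a _ => pt a),
      sum_fin_lt hn2n1 (fun i => if h : i < n1 then u ⟨i, h⟩ else 0), hW]
    apply Finset.sum_congr rfl
    intro b _
    rw [dif_pos (lt_of_lt_of_le (b.isLt.trans h2) h1)]
  have e2' : ∀ b : Fin n2, W - w b + Q = μ * v b := by
    intro b
    have := e2 b
    rw [hPw] at this
    exact this
  have bound3 : ∑ b : Fin n2, (W - w b)^2 ≤ α * U1 := bound_sub h3 w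
  have bound4 : Q^2 ≤ ((n1:ℝ)-κ) * U3 := by
    have hQf : Q = ∑ a ∈ Finset.univ.filter (fun a : Fin n1 => κ ≤ (a:ℕ)), u a :=
      (Finset.sum_filter _ _).symm
    have hU3f : U3 = ∑ a ∈ Finset.univ.filter (fun a : Fin n1 => κ ≤ (a:ℕ)), u a^2 :=
      (Finset.sum_filter _ _).symm
    have hcs := sq_sum_le_card_mul_sum_sq
      (s := Finset.univ.filter (fun a : Fin n1 => κ ≤ (a:ℕ))) (f := u)
    rw [← hQf, ← hU3f, card_ge, hcast] at hcs
    exact hcs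
  -- cross term
  set r : ℝ := ∑ b : Fin n2, (W - w b) * Q with hr
  have hQQ : ∑ _b : Fin n2, Q^2 = (n2:ℝ) * Q^2 := by
    rw [Finset.sum_const, Finset.card_univ, Fintype.card_fin, nsmul_eq_mul]
  have hr2 : r^2 ≤ (∑ b : Fin n2, (W - w b)^2) * ((n2:ℝ) * Q^2) := by
    have := Finset.sum_mul_sq_le_sq_mul_sq Finset.univ (fun b => W - w b) (fun _ => Q)
    rw [hQQ] at this
    exact this
  have hQ2b : (n2:ℝ) * Q^2 ≤ β * U3 := by
    calc (n2:ℝ) * Q^2 ≤ (n2:ℝ) * (((n1:ℝ)-κ) * U3) :=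
          mul_le_mul_of_nonneg_left bound4 (by positivity)
      _ = β * U3 := by rw [hβ]; ring
  have cross : 2 * r ≤ β * U1 + α * U3 := by
    apply twice_le (mul_nonneg hβnn hU1nn) (mul_nonneg hα0 hU3nn)
    calc r^2 ≤ (∑ b : Fin n2, (W - w b)^2) * ((n2:ℝ) * Q^2) := hr2
      _ ≤ (α * U1) * (β * U3) := by
          apply mul_le_mul bound3 hQ2b (by positivity) (mul_nonneg hα0 hU1nn)
      _ = (β * U1) * (α * U3) := by ring
  have expand : ∑ b : Fin n2, (μ * v b)^2 =
      (∑ b : Fin n2, (W - w b)^2) + 2 * r + (n2:ℝ) * Q^2 := by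
    have pt : ∀ b : Fin n2, (μ * v b)^2 = (W - w b)^2 + 2 * ((W - w b) * Q) + Q^2 := by
      intro b
      rw [← e2' b]
      ring
    rw [Finset.sum_congr rfl (fun b _ => pt b), Finset.sum_add_distrib, Finset.sum_add_distrib,
      ← Finset.mul_sum, hQQ, ← hr]
  have R2 : ∑ b : Fin n2, (μ * v b)^2 ≤ (α + β) * (U1 + U3) := by
    rw [expand]
    nlinarith [bound3, cross, hQ2b]
  -- U1 + U3 ≤ Ut
  have hU1alt : (∑ a : Fin n1, if (a:ℕ) < n2 then u a^2 else 0) = U1 := by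
    have pt : ∀ a : Fin n1, (if (a:ℕ) < n2 then u a^2 else 0) =
        (if (a:ℕ) < n2 then (fun i => if h : i < n1 then u ⟨i, h⟩^2 else 0) (a:ℕ) else 0) := by
      intro a
      beta_reduce
      by_cases h : (a:ℕ) < n2
      · rw [if_pos h, if_pos h, dif_pos a.isLt, Fin.eta]
      · rw [if_neg h, if_neg h]
    rw [Finset.sum_congr rfl (fun a _ => pt a),
      sum_fin_lt hn2n1 (fun i => if h : i < n1 then u ⟨i, h⟩^2 else 0), hU1]
    apply Finset.sum_congr rfl
    intro b _
    rw [dif_pos (lt_of_lt_of_le (b.isLt.trans h2) h1)]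
  have hU13 : U1 + U3 ≤ Ut := by
    rw [← hU1alt, hU3, ← Finset.sum_add_distrib, hUt]
    apply Finset.sum_le_sum
    intro a _
    by_cases h : (a:ℕ) < n2
    · rw [if_pos h, if_neg (by omega)]
      simp [sq_nonneg]
    · rw [if_neg h]
      by_cases hk : κ ≤ (a:ℕ)
      · rw [if_pos hk]
        simp [sq_nonneg]
      · rw [if_neg hk]
        simp [sq_nonneg]
  have R2' : ∑ b : Fin n2, (μ * v b)^2 ≤ (α + β) * Ut :=
    le_trans R2 (mul_le_mul_of_nonneg_left hU13 (by positivity))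
  -- ===== assemble =====
  have lhs_eq : μ^2 * (Ut + U2) = (∑ a : Fin n1, (μ * u a)^2) + (∑ b : Fin n2, (μ * v b)^2) := by
    rw [hUt, hU2, mul_add, Finset.mul_sum, Finset.mul_sum]
    congr 1 <;> exact Finset.sum_congr rfl (fun i _ => by ring)
  calc μ^2 * (Ut + U2) = (∑ a : Fin n1, (μ * u a)^2) + (∑ b : Fin n2, (μ * v b)^2) := lhs_eq
    _ ≤ (α + β) * U2 + (α + β) * Ut := add_le_add R1 R2'
    _ = (α + β) * (Ut + U2) := by ring

end boundsec

set_option maxHeartbeats 1000000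

/-- For `n1 ≥ κ > n2 ≥ 1`, the least eigenvalue of the complement of `B2(n1, n2; κ)`
equals `−√((n2−1)² + (n1−κ)·n2)`. -/
theorem minEig_compl_B2 (n1 n2 κ : ℕ) (h1 : κ ≤ n1) (h2 : n2 < κ) (h3 : 1 ≤ n2) :
    minEig (adjMat ((B2 n1 n2 κ)ᶜ)) =
      - Real.sqrt (((n2 : ℝ) - 1) ^ 2 + ((n1 : ℝ) - (κ : ℝ)) * (n2 : ℝ)) := by
  have hn2n1 : n2 ≤ n1 := le_of_lt (lt_of_lt_of_le h2 h1)
  have hβ0 : (0:ℝ) ≤ (n1:ℝ) - κ := by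
    have : (κ:ℝ) ≤ (n1:ℝ) := by exact_mod_cast h1
    linarith
  set T : ℝ := ((n2 : ℝ) - 1) ^ 2 + ((n1 : ℝ) - (κ : ℝ)) * (n2 : ℝ) with hT
  have hTnn : 0 ≤ T := add_nonneg (sq_nonneg _) (mul_nonneg hβ0 (by positivity))
  set t : ℝ := Real.sqrt T with htdef
  have ht2 : t ^ 2 = T := Real.sq_sqrt hTnn
  have htnn : 0 ≤ t := Real.sqrt_nonneg T
  -- lower bound for every eigenvalue
  have hlb : ∀ μ ∈ {μ : ℝ | ∃ x : (Fin n1 ⊕ Fin n2) → ℝ,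
      x ≠ 0 ∧ (adjMat ((B2 n1 n2 κ)ᶜ)).mulVec x = μ • x}, -t ≤ μ := by
    rintro μ ⟨x, hx0, hx⟩
    have e1 : ∀ a : Fin n1, (if h : (a:ℕ) < n2 then (∑ b, x (Sum.inr b)) - x (Sum.inr ⟨(a:ℕ), h⟩)
        else if κ ≤ (a:ℕ) then (∑ b, x (Sum.inr b)) else 0) = μ * x (Sum.inl a) := by
      intro a
      have h := congrFun hx (Sum.inl a)
      rw [mulVec_inl h2 x a, rowl_eval h2 (fun b => x (Sum.inr b)) a] at h
      simp only [Pi.smul_apply, smul_eq_mul] at h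
      exact h
    have e2 : ∀ b : Fin n2, (∑ a : Fin n1, if (a:ℕ) < n2 then x (Sum.inl a) else 0)
        - x (Sum.inl ⟨(b:ℕ), lt_of_lt_of_le (b.isLt.trans h2) h1⟩)
        + (∑ a : Fin n1, if κ ≤ (a:ℕ) then x (Sum.inl a) else 0) = μ * x (Sum.inr b) := by
      intro b
      have h := congrFun hx (Sum.inr b)
      rw [mulVec_inr h2 x b, rowr_eval h1 h2 (fun a => x (Sum.inl a)) b] at h
      simp only [Pi.smul_apply, smul_eq_mul] at h
      exact h
    have key := eig_bound h1 h2 h3 μ (fun a => x (Sum.inl a)) (fun b => x (Sum.inr b)) e1 e2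
    have hpos : 0 < (∑ a : Fin n1, x (Sum.inl a)^2) + (∑ b : Fin n2, x (Sum.inr b)^2) := by
      have hs1 : 0 ≤ ∑ a : Fin n1, x (Sum.inl a)^2 :=
        Finset.sum_nonneg (fun a _ => sq_nonneg _)
      have hs2 : 0 ≤ ∑ b : Fin n2, x (Sum.inr b)^2 :=
        Finset.sum_nonneg (fun b _ => sq_nonneg _)
      rcases Function.ne_iff.mp hx0 with ⟨i, hi⟩
      rcases i with a | b
      · have hi' : x (Sum.inl a) ≠ 0 := hi
        have hlt : 0 < x (Sum.inl a)^2 :=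
          lt_of_le_of_ne (sq_nonneg _) (Ne.symm (pow_ne_zero 2 hi'))
        have hle : x (Sum.inl a)^2 ≤ ∑ a : Fin n1, x (Sum.inl a)^2 :=
          Finset.single_le_sum (f := fun a : Fin n1 => x (Sum.inl a)^2)
            (fun i _ => sq_nonneg _) (Finset.mem_univ a)
        linarith
      · have hi' : x (Sum.inr b) ≠ 0 := hi
        have hlt : 0 < x (Sum.inr b)^2 :=
          lt_of_le_of_ne (sq_nonneg _) (Ne.symm (pow_ne_zero 2 hi'))
        have hle : x (Sum.inr b)^2 ≤ ∑ b : Fin n2, x (Sum.inr b)^2 :=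
          Finset.single_le_sum (f := fun b : Fin n2 => x (Sum.inr b)^2)
            (fun i _ => sq_nonneg _) (Finset.mem_univ b)
        linarith
    have hμ2 : μ^2 ≤ T := (mul_le_mul_iff_of_pos_right hpos).mp key
    nlinarith [hμ2, ht2, htnn, sq_nonneg (μ + t)]
  -- membership
  have hmem : -t ∈ {μ : ℝ | ∃ x : (Fin n1 ⊕ Fin n2) → ℝ,
      x ≠ 0 ∧ (adjMat ((B2 n1 n2 κ)ᶜ)).mulVec x = μ • x} := by
    by_cases hdeg : T = 0
    · -- degenerate case: n2 = 1 and n1 = κ, the graph has no edges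
      have ht0 : t = 0 := by rw [htdef, hdeg, Real.sqrt_zero]
      have hn2R : (1:ℝ) ≤ (n2:ℝ) := by exact_mod_cast h3
      have hsq0 : ((n2:ℝ)-1)^2 = 0 := by
        nlinarith [sq_nonneg ((n2:ℝ)-1), mul_nonneg hβ0 (show (0:ℝ) ≤ (n2:ℝ) by positivity)]
      have hn2e : n2 = 1 := by
        have : (n2:ℝ) = 1 := by nlinarith [hsq0]
        exact_mod_cast this
      have hmul0 : ((n1:ℝ)-κ) * (n2:ℝ) = 0 := by
        nlinarith [sq_nonneg ((n2:ℝ)-1)]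
      have hn1e : n1 = κ := by
        rcases mul_eq_zero.mp hmul0 with h | h
        · have : (n1:ℝ) = (κ:ℝ) := by linarith
          exact_mod_cast this
        · exfalso; linarith
      refine ⟨fun _ => 1, ?_, ?_⟩
      · intro h
        have := congrFun h (Sum.inr ⟨0, h3⟩)
        simp at this
      · rw [ht0, neg_zero, zero_smul]
        funext z
        rcases z with a | b
        · rw [mulVec_inl h2]
          simp only [Pi.zero_apply]
          apply Finset.sum_eq_zero
          intro b _
          have ha := a.isLt
          have hb := b.isLt
          rw [if_neg (by omega)]
        · rw [mulVec_inr h2]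
          simp only [Pi.zero_apply]
          apply Finset.sum_eq_zero
          intro a _
          have ha := a.isLt
          have hb := b.isLt
          rw [if_neg (by omega)]
    · -- nondegenerate case: explicit eigenvector
      have htpos : 0 < t := Real.sqrt_pos.mpr (lt_of_le_of_ne hTnn (Ne.symm hdeg))
      refine ⟨Sum.elim
        (fun a : Fin n1 => if (a:ℕ) < n2 then (n2:ℝ)-1 else if (a:ℕ) < κ then 0 else (n2:ℝ))
        (fun _ : Fin n2 => -t), ?_, ?_⟩
      · intro h
        have := congrFun h (Sum.inr ⟨0, h3⟩)
        simp only [Sum.elim_inr, Pi.zero_apply] at this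
        linarith
      · funext z
        rcases z with a | b
        · rw [mulVec_inl h2, rowl_eval h2]
          simp only [Sum.elim_inr, Sum.elim_inl, Pi.smul_apply, smul_eq_mul, Finset.sum_const,
            Finset.card_univ, Fintype.card_fin, nsmul_eq_mul]
          by_cases ha : (a:ℕ) < n2
          · rw [dif_pos ha, if_pos ha]
            ring
          · rw [dif_neg ha, if_neg ha]
            by_cases hk : κ ≤ (a:ℕ)
            · rw [if_pos hk, if_neg (show ¬ (a:ℕ) < κ by omega)]
              ring
            · rw [if_neg hk, if_pos (show (a:ℕ) < κ by omega)]
              ring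
        · rw [mulVec_inr h2, rowr_eval h1 h2]
          simp only [Sum.elim_inl, Sum.elim_inr, Pi.smul_apply, smul_eq_mul]
          have s1 : (∑ a : Fin n1, if (a:ℕ) < n2 then
              (if (a:ℕ) < n2 then (n2:ℝ)-1 else if (a:ℕ) < κ then 0 else (n2:ℝ)) else 0)
              = (n2:ℝ) * ((n2:ℝ)-1) := by
            have pw : ∀ a : Fin n1, (if (a:ℕ) < n2 then
                (if (a:ℕ) < n2 then (n2:ℝ)-1 else if (a:ℕ) < κ then 0 else (n2:ℝ)) else 0)
                = (if (a:ℕ) < n2 then (fun _ : ℕ => (n2:ℝ)-1) (a:ℕ) else 0) := by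
              intro a
              by_cases h : (a:ℕ) < n2
              · rw [if_pos h, if_pos h, if_pos h]
              · rw [if_neg h, if_neg h]
            rw [Finset.sum_congr rfl (fun a _ => pw a), sum_fin_lt hn2n1 (fun _ => (n2:ℝ)-1),
              Finset.sum_const, Finset.card_univ, Fintype.card_fin, nsmul_eq_mul]
          have s3 : (∑ a : Fin n1, if κ ≤ (a:ℕ) then
              (if (a:ℕ) < n2 then (n2:ℝ)-1 else if (a:ℕ) < κ then 0 else (n2:ℝ)) else 0)
              = ((n1 - κ : ℕ):ℝ) * (n2:ℝ) := by
            have pw : ∀ a : Fin n1, (if κ ≤ (a:ℕ) then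
                (if (a:ℕ) < n2 then (n2:ℝ)-1 else if (a:ℕ) < κ then 0 else (n2:ℝ)) else 0)
                = (if κ ≤ (a:ℕ) then (n2:ℝ) else 0) := by
              intro a
              by_cases hk : κ ≤ (a:ℕ)
              · rw [if_pos hk, if_pos hk, if_neg (by omega), if_neg (by omega)]
              · rw [if_neg hk, if_neg hk]
            rw [Finset.sum_congr rfl (fun a _ => pw a), sum_fin_ge h1]
          rw [s1, s3]
          rw [if_pos (show ((⟨(b:ℕ), lt_of_lt_of_le (b.isLt.trans h2) h1⟩ : Fin n1) : ℕ) < n2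
            from b.isLt)]
          rw [Nat.cast_sub h1]
          have htt : (-t) * (-t) = T := by rw [← ht2]; ring
          rw [htt, hT]
          ring
  unfold minEig
  exact le_antisymm (csInf_le ⟨-t, hlb⟩ hmem) (le_csInf ⟨-t, hmem⟩ hlb)
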